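/- For positive definite matrices A and B and t ∈ [0,1], the trace of the weighted geometric mean satisfies tr(A #_t B) ≤ (tr A)^{1−t} (tr B)^t. -/

import Mathlib

open scoped ComplexOrder


open Finset in
lemma sum_mul_rpow_le {ι : Type*} (s : Finset ι) (w μ : ι → ℝ)
    (hw : ∀ i, 0 ≤ w i) (hμ : ∀ i, 0 ≤ μ i) {t : ℝ} (ht0 : 0 ≤ t) (ht1 : t ≤ 1) :
    ∑ i ∈ s, w i * μ i ^ t ≤ (∑ i ∈ s, w i) ^ (1 - t) * (∑ i ∈ s, w i * μ i) ^ t := by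
  rcases eq_or_lt_of_le ht0 with rfl | ht0'
  · simp [Real.rpow_zero, Real.rpow_one]
  rcases eq_or_lt_of_le ht1 with rfl | ht1'
  · simp [Real.rpow_zero, Real.rpow_one]
  have h1t : 0 < 1 - t := by linarith
  have hpq : (1 / (1 - t)).HolderConjugate (1 / t) := by
    rw [Real.holderConjugate_iff]; constructor
    · rw [lt_div_iff₀ h1t]; linarith
    · rw [one_div, one_div, inv_inv, inv_inv]; ring
  have key := Real.inner_le_Lp_mul_Lq_of_nonneg (s := s)
      (f := fun i => w i ^ (1 - t)) (g := fun i => (w i * μ i) ^ t) hpq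
      (fun i _ => Real.rpow_nonneg (hw i) _)
      (fun i _ => Real.rpow_nonneg (mul_nonneg (hw i) (hμ i)) _)
  have e1 : ∀ i, w i ^ (1 - t) * (w i * μ i) ^ t = w i * μ i ^ t := by
    intro i
    rw [Real.mul_rpow (hw i) (hμ i), ← mul_assoc, ← Real.rpow_add' (hw i) (by norm_num)]
    norm_num
  have e2 : ∀ i, (w i ^ (1 - t)) ^ (1 / (1 - t)) = w i := by
    intro i
    rw [← Real.rpow_mul (hw i), mul_one_div_cancel h1t.ne', Real.rpow_one]
  have e3 : ∀ i, ((w i * μ i) ^ t) ^ (1 / t) = w i * μ i := by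
    intro i
    rw [← Real.rpow_mul (mul_nonneg (hw i) (hμ i)), mul_one_div_cancel ht0'.ne',
      Real.rpow_one]
  simp only [e1, e2, e3, one_div_one_div] at key
  exact key


namespace Matrix.IsHermitian
variable {m : Type*} [Fintype m] [DecidableEq m] {A : Matrix m m ℂ} (hA : A.IsHermitian)

lemma cfc_mul_cfc' (f g : ℝ → ℝ) :
    hA.cfc f * hA.cfc g = hA.cfc (fun x => f x * g x) := by
  have hU : (star (eigenvectorUnitary hA : Matrix m m ℂ)) *
      (eigenvectorUnitary hA : Matrix m m ℂ) = 1 :=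
    Unitary.star_mul_self_of_mem (eigenvectorUnitary hA).2
  simp only [Matrix.IsHermitian.cfc, Unitary.conjStarAlgAut_apply, Unitary.coe_star]
  rw [show ∀ (a b c d e f : Matrix m m ℂ), (a * b * c) * (d * e * f)
      = a * (b * ((c * d) * e)) * f from fun _ _ _ _ _ _ => by
    simp only [mul_assoc], hU, one_mul, diagonal_mul_diagonal]
  have : (fun i => ((f (hA.eigenvalues i) : ℂ)) * ((g (hA.eigenvalues i) : ℂ)))
      = (RCLike.ofReal : ℝ → ℂ) ∘ (fun x => f x * g x) ∘ hA.eigenvalues := by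
    funext i; simp
  rw [show (fun i => ((RCLike.ofReal : ℝ → ℂ) ∘ f ∘ hA.eigenvalues) i *
        ((RCLike.ofReal : ℝ → ℂ) ∘ g ∘ hA.eigenvalues) i)
      = (RCLike.ofReal : ℝ → ℂ) ∘ (fun x => f x * g x) ∘ hA.eigenvalues from by
    funext i; simp]

lemma cfc_congr' {f g : ℝ → ℝ} (h : ∀ i, f (hA.eigenvalues i) = g (hA.eigenvalues i)) :
    hA.cfc f = hA.cfc g := by
  simp only [Matrix.IsHermitian.cfc]
  rw [show ((RCLike.ofReal : ℝ → ℂ) ∘ f ∘ hA.eigenvalues)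
      = (RCLike.ofReal : ℝ → ℂ) ∘ g ∘ hA.eigenvalues from by
    funext i; simp [h i]]

lemma cfc_one' : hA.cfc (fun _ => 1) = 1 := by
  have hU : (eigenvectorUnitary hA : Matrix m m ℂ) *
      (star (eigenvectorUnitary hA : Matrix m m ℂ)) = 1 :=
    Unitary.mul_star_self_of_mem (eigenvectorUnitary hA).2
  simp only [Matrix.IsHermitian.cfc, Unitary.conjStarAlgAut_apply, Unitary.coe_star]
  rw [show diagonal ((RCLike.ofReal : ℝ → ℂ) ∘ (fun _ : ℝ => 1) ∘ hA.eigenvalues)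
      = (1 : Matrix m m ℂ) from by
    rw [show ((RCLike.ofReal : ℝ → ℂ) ∘ (fun _ : ℝ => 1) ∘ hA.eigenvalues) = fun _ => 1 from by
      funext i; simp, diagonal_one], mul_one, hU]

lemma cfc_id' : hA.cfc (fun x => x) = A := by
  conv_rhs => rw [hA.spectral_theorem]
  rfl

lemma cfc_isHermitian (f : ℝ → ℝ) : (hA.cfc f).IsHermitian := by
  show star (hA.cfc f) = hA.cfc f
  simp only [Matrix.IsHermitian.cfc, Unitary.conjStarAlgAut_apply, Unitary.coe_star, star_mul, star_star, mul_assoc]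
  congr 1
  congr 1
  show (diagonal ((RCLike.ofReal : ℝ → ℂ) ∘ f ∘ hA.eigenvalues))ᴴ = _
  rw [diagonal_conjTranspose]
  rw [show star ((RCLike.ofReal : ℝ → ℂ) ∘ f ∘ hA.eigenvalues)
      = (RCLike.ofReal : ℝ → ℂ) ∘ f ∘ hA.eigenvalues from by
    funext i; simp [Pi.star_def]]

end Matrix.IsHermitian


/-- trace of `V * diagonal d * star V * X` as a sum. -/
lemma trace_conj_diag_mul {m : Type*} [Fintype m] [DecidableEq m]
    (V : Matrix m m ℂ) (d : m → ℂ) (X : Matrix m m ℂ) :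
    (V * Matrix.diagonal d * star V * X).trace
      = ∑ i, d i * (star V * X * V) i i := by
  rw [mul_assoc (V * Matrix.diagonal d), Matrix.trace_mul_cycle, Matrix.trace_mul_comm]
  simp [Matrix.trace, Matrix.diag, Matrix.diagonal_mul]

lemma conj_entry_eq {m : Type*} [Fintype m] [DecidableEq m]
    (V X : Matrix m m ℂ) (i : m) :
    (star V * X * V) i i
      = dotProduct (star (fun k => V k i)) (X.mulVec (fun k => V k i)) := by
  simp only [Matrix.mul_apply, Matrix.mulVec, dotProduct, Matrix.star_apply,
    Pi.star_apply, Finset.sum_mul, Finset.mul_sum]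
  rw [Finset.sum_comm]
  exact Finset.sum_congr rfl fun k _ => Finset.sum_congr rfl fun j _ => by ring

/-- The `r`-th power of a matrix, defined via the spectral theorem (functional calculus)
when the matrix is Hermitian, and junk value `0` otherwise. -/
noncomputable def Matrix.rpow {n : ℕ} (A : Matrix (Fin n) (Fin n) ℂ) (r : ℝ) :
    Matrix (Fin n) (Fin n) ℂ :=
  if h : A.IsHermitian then h.cfc (fun x => x ^ r) else 0

/-- The `t`-weighted geometric mean `A #_t B = A^{1/2} (A^{-1/2} B A^{-1/2})^t A^{1/2}`. -/
noncomputable def Matrix.geomMean {n : ℕ} (A B : Matrix (Fin n) (Fin n) ℂ) (t : ℝ) :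
    Matrix (Fin n) (Fin n) ℂ :=
  A.rpow (1 / 2) * (Matrix.rpow (A.rpow (-(1 / 2)) * B * A.rpow (-(1 / 2))) t) * A.rpow (1 / 2)

/-- For positive definite matrices `A`, `B` and `t ∈ [0,1]`,
`tr(A #_t B) ≤ (tr A)^{1-t} (tr B)^t`. -/
theorem trace_geomMean_le {n : ℕ} (A B : Matrix (Fin n) (Fin n) ℂ)
    (hA : A.PosDef) (hB : B.PosDef) (t : ℝ) (ht0 : 0 ≤ t) (ht1 : t ≤ 1) :
    (Matrix.geomMean A B t).trace.re ≤ A.trace.re ^ (1 - t) * B.trace.re ^ t := by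
  have hA1 := hA.1
  have hrp : ∀ r : ℝ, A.rpow r = hA1.cfc (fun x => x ^ r) := fun r => dif_pos hA1
  have hlam : ∀ i, 0 < hA1.eigenvalues i := hA.eigenvalues_pos
  set S := A.rpow (1 / 2) with hSdef
  set Si := A.rpow (-(1 / 2)) with hSidef
  set C := Si * B * Si with hCdef
  have hSS : S * S = A := by
    rw [hSdef, hrp, hA1.cfc_mul_cfc']
    rw [hA1.cfc_congr' (g := fun x => x) (fun i => by
      rw [← Real.rpow_add (hlam i)]; norm_num), hA1.cfc_id']
  have hSih : Si.IsHermitian := by rw [hSidef, hrp]; exact hA1.cfc_isHermitian _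
  have hSAS : Si * A * Si = 1 := by
    rw [← hSS, hSdef, hSidef, hrp, hrp, hA1.cfc_mul_cfc', hA1.cfc_mul_cfc',
      hA1.cfc_mul_cfc']
    rw [hA1.cfc_congr' (g := fun _ => 1) (fun i => by
      rw [← Real.rpow_add (hlam i), ← Real.rpow_add (hlam i), ← Real.rpow_add (hlam i)]
      norm_num), hA1.cfc_one']
  have hCps : C.PosSemidef := by
    have h := hB.posSemidef.mul_mul_conjTranspose_same Si
    rwa [hSih.eq] at h
  have hCh : C.IsHermitian := hCps.1
  have hmu : ∀ i, 0 ≤ hCh.eigenvalues i := fun i => hCps.eigenvalues_nonneg i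
  have hgm : Matrix.geomMean A B t = S * Matrix.rpow C t * S := by
    rw [hCdef, hSidef, hSdef]; rfl
  have hct : Matrix.rpow C t = hCh.cfc (fun x => x ^ t) := dif_pos hCh
  have tr1 : ∀ X : Matrix (Fin n) (Fin n) ℂ, (S * X * S).trace = (X * A).trace := by
    intro X
    rw [Matrix.trace_mul_cycle, hSS, Matrix.trace_mul_comm]
  set V := (Matrix.IsHermitian.eigenvectorUnitary hCh : Matrix (Fin n) (Fin n) ℂ) with hV
  set μ := hCh.eigenvalues with hmudef
  set w : Fin n → ℝ := fun i => ((star V * A * V) i i).re with hwdef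
  have hw : ∀ i, 0 ≤ w i := by
    intro i
    rw [hwdef]
    simp only
    rw [conj_entry_eq]
    have := hA.posSemidef.re_dotProduct_nonneg (fun k => V k i)
    simpa using this
  have hsums : ∀ d : Fin n → ℝ,
      (∑ i, (Complex.ofReal (d i)) * (star V * A * V) i i).re = ∑ i, d i * w i := by
    intro d
    rw [Complex.re_sum]
    exact Finset.sum_congr rfl fun i _ => Complex.re_ofReal_mul _ _
  have hVV : V * star V = 1 :=
    Unitary.mul_star_self_of_mem (Matrix.IsHermitian.eigenvectorUnitary hCh).2
  have trA : ∑ i, w i = A.trace.re := by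
    have h1 : ∑ i, (star V * A * V) i i = (star V * A * V).trace := by
      simp [Matrix.trace, Matrix.diag]
    have h2 : (star V * A * V).trace = A.trace := by
      rw [Matrix.trace_mul_cycle, hVV, one_mul]
    calc ∑ i, w i = (∑ i, (star V * A * V) i i).re := by rw [Complex.re_sum]
    _ = A.trace.re := by rw [h1, h2]
  have trB : ∑ i, μ i * w i = B.trace.re := by
    have h1 : ∑ i, (Complex.ofReal (μ i)) * (star V * A * V) i i = (C * A).trace := by
      have hspec : V * Matrix.diagonal ((RCLike.ofReal : ℝ → ℂ) ∘ μ) * star V = C :=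
        hCh.spectral_theorem.symm
      rw [← hspec, trace_conj_diag_mul]
      exact Finset.sum_congr rfl fun i _ => rfl
    have h2 : (C * A).trace = B.trace := by
      rw [hCdef, Matrix.mul_assoc (Si * B) Si A, Matrix.trace_mul_comm,
        ← Matrix.mul_assoc (Si * A) Si B, Matrix.mul_assoc Si A Si]
      rw [← Matrix.mul_assoc Si A Si, hSAS, one_mul]
    rw [← hsums, h1, h2]
  -- main chain
  rw [hgm, tr1, hct, Matrix.IsHermitian.cfc, Unitary.conjStarAlgAut_apply,
    trace_conj_diag_mul]
  have e : (∑ i, ((RCLike.ofReal : ℝ → ℂ) ∘ (fun x => x ^ t) ∘ hCh.eigenvalues) i *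
        (star (Matrix.IsHermitian.eigenvectorUnitary hCh : Matrix (Fin n) (Fin n) ℂ) * A *
          (Matrix.IsHermitian.eigenvectorUnitary hCh : Matrix (Fin n) (Fin n) ℂ)) i i)
      = ∑ i, (Complex.ofReal (μ i ^ t)) * (star V * A * V) i i := rfl
  rw [e, hsums]
  have final := sum_mul_rpow_le Finset.univ w μ hw hmu ht0 ht1
  rw [show (∑ i, w i * μ i) = ∑ i, μ i * w i from
    Finset.sum_congr rfl fun i _ => mul_comm _ _, trA, trB] at final
  rw [show (∑ i, μ i ^ t * w i) = ∑ i, w i * μ i ^ t from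
    Finset.sum_congr rfl fun i _ => mul_comm _ _]
  exact final
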